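/- Let X be a compact Hausdorff space, A a unital C*-algebra, and E a *-subalgebra of C(X,A). Suppose there is a closed equivalence relation R on X such that M(f(x)) = M(f(y)) for each selfadjoint f ∈ E whenever (x,y) ∈ R. Let π : X → X/R denote the canonical projection. If f is a selfadjoint element of the uniform closure of E, a and b are real numbers, and U = {x ∈ X : a·1 < f(x) < b·1}, then π⁻¹(π(U)) = U and π(U) is open in the quotient space X/R. -/

import Mathlib

open Pointwise

noncomputable section

variable {X A : Type*}

def Mspec [CStarAlgebra A] (a : A) : ℝ := sSup (spectrum ℝ a)

def CstarLT [CStarAlgebra A] [PartialOrder A] [StarOrderedRing A] (a b : A) : Prop :=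
  a ≤ b ∧ IsUnit (b - a)

section helpers

variable [CStarAlgebra A] [PartialOrder A] [StarOrderedRing A]

lemma mspec_le_iff [Nontrivial A] {c : A} (hc : IsSelfAdjoint c) (r : ℝ) :
    c ≤ r • (1 : A) ↔ Mspec c ≤ r := by
  have h1 : r • (1 : A) = algebraMap ℝ A r := (Algebra.algebraMap_eq_smul_one r).symm
  rw [h1, le_algebraMap_iff_spectrum_le (a := c) hc]
  constructor
  · exact fun h => csSup_le hc.spectrum_nonempty h
  · exact fun h t ht => le_trans (le_csSup (spectrum.isBounded c).bddAbove ht) h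

lemma mspec_mem [Nontrivial A] {c : A} (hc : IsSelfAdjoint c) : Mspec c ∈ spectrum ℝ c :=
  (spectrum.isCompact c).sSup_mem hc.spectrum_nonempty

lemma cstarLT_smul_one_iff [Nontrivial A] {c : A} (hc : IsSelfAdjoint c) (b : ℝ) :
    CstarLT c (b • (1 : A)) ↔ Mspec c < b := by
  have key : IsUnit (b • (1 : A) - c) ↔ b ∉ spectrum ℝ c := by
    have e : b • (1 : A) - c = algebraMap ℝ A b - c := by
      rw [Algebra.algebraMap_eq_smul_one]
    have h0 : ((0 : ℝ) ∈ ({b} : Set ℝ) - spectrum ℝ c) ↔ b ∈ spectrum ℝ c := by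
      simp [Set.mem_sub, sub_eq_zero, eq_comm]
    rw [e, ← spectrum.zero_notMem_iff ℝ, ← spectrum.singleton_sub_eq, h0]
  constructor
  · rintro ⟨hle, hunit⟩
    rcases lt_or_eq_of_le ((mspec_le_iff hc b).mp hle) with h | h
    · exact h
    · exact absurd (h ▸ mspec_mem hc) (key.mp hunit)
  · intro h
    refine ⟨(mspec_le_iff hc b).mpr h.le, key.mpr fun hb => ?_⟩
    exact absurd (le_csSup (spectrum.isBounded c).bddAbove hb) (not_le.mpr h)

lemma smul_one_cstarLT_iff [Nontrivial A] {c : A} (hc : IsSelfAdjoint c) (a : ℝ) :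
    CstarLT (a • (1 : A)) c ↔ Mspec (-c) < -a := by
  rw [← cstarLT_smul_one_iff hc.neg (-a)]
  unfold CstarLT
  rw [neg_smul]
  constructor
  · rintro ⟨h1, h2⟩
    exact ⟨neg_le_neg h1, by rwa [show -(a • (1:A)) - -c = c - a • 1 by abel]⟩
  · rintro ⟨h1, h2⟩
    exact ⟨le_of_neg_le_neg h1, by rwa [show -(a • (1:A)) - -c = c - a • 1 by abel] at h2⟩

lemma mspec_le_add_norm [Nontrivial A] {c d : A} (hc : IsSelfAdjoint c) (hd : IsSelfAdjoint d) :
    Mspec c ≤ Mspec d + ‖c - d‖ := by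
  have hsub : c - d ≤ ‖c - d‖ • (1 : A) := by
    rw [mspec_le_iff (hc.sub hd)]
    exact csSup_le (hc.sub hd).spectrum_nonempty fun t ht =>
      (Real.le_norm_self t).trans (spectrum.norm_le_norm_of_mem ht)
  have hd' : d ≤ Mspec d • (1 : A) := (mspec_le_iff hd _).mpr le_rfl
  have : c ≤ (Mspec d + ‖c - d‖) • (1 : A) := by
    calc c = d + (c - d) := by abel
    _ ≤ Mspec d • (1 : A) + ‖c - d‖ • (1 : A) := add_le_add hd' hsub
    _ = (Mspec d + ‖c - d‖) • (1 : A) := (add_smul _ _ _).symm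
  exact (mspec_le_iff hc _).mp this

lemma abs_mspec_sub_le [Nontrivial A] {c d : A} (hc : IsSelfAdjoint c) (hd : IsSelfAdjoint d) :
    |Mspec c - Mspec d| ≤ ‖c - d‖ := by
  rw [abs_sub_le_iff]
  constructor
  · linarith [mspec_le_add_norm hc hd]
  · rw [norm_sub_rev]; linarith [mspec_le_add_norm hd hc]

end helpers

section main

variable [TopologicalSpace X] [CompactSpace X] [T2Space X] [CStarAlgebra A]
  [PartialOrder A] [StarOrderedRing A]

lemma selfadjoint_apply {g : C(X, A)} (hg : IsSelfAdjoint g) (x : X) :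
    IsSelfAdjoint (g x) := by
  have := congrFun (congrArg (DFunLike.coe) hg) x
  simpa [IsSelfAdjoint] using this

lemma mspec_comp_continuous [Nontrivial A] (g : C(X, A)) (hg : IsSelfAdjoint g) :
    Continuous fun x => Mspec (g x) := by
  have hgx : ∀ x : X, IsSelfAdjoint (g x) := fun x => selfadjoint_apply hg x
  rw [continuous_iff_continuousAt]
  intro x0
  rw [ContinuousAt, tendsto_iff_dist_tendsto_zero]
  apply squeeze_zero (fun t => dist_nonneg)
    (g := fun x => ‖g x - g x0‖)
  · intro x
    rw [Real.dist_eq]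
    exact abs_mspec_sub_le (hgx x) (hgx x0)
  · have : Continuous fun x => ‖g x - g x0‖ := (g.continuous.sub continuous_const).norm
    simpa using this.tendsto x0

/-- extension of the M-invariance to the closure of E -/
lemma mspec_eq_of_rel [Nontrivial A]
    (E : NonUnitalStarSubalgebra ℂ C(X, A))
    (R : Setoid X)
    (hM : ∀ x y : X, R.r x y → ∀ f ∈ E, IsSelfAdjoint f → Mspec (f x) = Mspec (f y))
    (g : C(X, A)) (hg : g ∈ closure (E : Set C(X, A))) (hgsa : IsSelfAdjoint g)
    (x y : X) (hxy : R.r x y) : Mspec (g x) = Mspec (g y) := by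
  have key : ∀ ε : ℝ, 0 < ε → |Mspec (g x) - Mspec (g y)| ≤ 2 * ε := by
    intro ε hε
    obtain ⟨g', hg'E, hg'⟩ := Metric.mem_closure_iff.mp hg ε hε
    set h : C(X, A) := (2⁻¹ : ℂ) • (g' + star g') with hh
    have hhE : h ∈ E := SMulMemClass.smul_mem _ (add_mem hg'E (star_mem hg'E))
    have hhsa : IsSelfAdjoint h := by
      rw [hh]
      rw [IsSelfAdjoint, star_smul, star_add, star_star]
      rw [show star (2⁻¹ : ℂ) = (2⁻¹ : ℂ) by simp, add_comm]
    have hgh : ‖g - h‖ < ε := by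
      have hrepr : g - h = (2⁻¹ : ℂ) • ((g - g') + star (g - g')) := by
        rw [hh, star_sub, hgsa.star_eq]
        rw [smul_add, smul_add, smul_sub, smul_sub]
        rw [← sub_eq_iff_eq_add'] at *
        module
      rw [hrepr]
      calc ‖(2⁻¹ : ℂ) • ((g - g') + star (g - g'))‖
          ≤ ‖(2⁻¹ : ℂ)‖ * (‖g - g'‖ + ‖star (g - g')‖) :=
            (norm_smul _ _).le.trans (by gcongr; exact norm_add_le _ _)
        _ = ‖g - g'‖ := by rw [norm_star]; simp; ring
        _ < ε := by rwa [← dist_eq_norm]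
    have hbound : ∀ z : X, |Mspec (g z) - Mspec (h z)| ≤ ε := by
      intro z
      refine (abs_mspec_sub_le (selfadjoint_apply hgsa z) (selfadjoint_apply hhsa z)).trans ?_
      calc ‖g z - h z‖ = ‖(g - h) z‖ := by rw [ContinuousMap.sub_apply]
        _ ≤ ‖g - h‖ := ContinuousMap.norm_coe_le_norm _ z
        _ ≤ ε := hgh.le
    have hmid : Mspec (h x) = Mspec (h y) := hM x y hxy h hhE hhsa
    have hdecomp : Mspec (g x) - Mspec (g y)
        = (Mspec (g x) - Mspec (h x)) + (Mspec (h y) - Mspec (g y)) := by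
      rw [hmid]; ring
    rw [hdecomp]
    calc |(Mspec (g x) - Mspec (h x)) + (Mspec (h y) - Mspec (g y))|
        ≤ |Mspec (g x) - Mspec (h x)| + |Mspec (h y) - Mspec (g y)| := abs_add_le _ _
      _ ≤ ε + ε := add_le_add (hbound x) (by rw [abs_sub_comm]; exact hbound y)
      _ = 2 * ε := by ring
  by_contra hne
  have habs : 0 < |Mspec (g x) - Mspec (g y)| := abs_pos.mpr (sub_ne_zero.mpr hne)
  have := key (|Mspec (g x) - Mspec (g y)| / 4) (by linarith)
  linarith

end main

theorem saturated_and_isOpen_image_of_strict_bounds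
    [TopologicalSpace X] [CompactSpace X] [T2Space X] [CStarAlgebra A]
    [PartialOrder A] [StarOrderedRing A]
    (E : NonUnitalStarSubalgebra ℂ C(X, A))
    (R : Setoid X) (hRclosed : IsClosed {p : X × X | R.r p.1 p.2})
    (hM : ∀ x y : X, R.r x y → ∀ f ∈ E, IsSelfAdjoint f → Mspec (f x) = Mspec (f y))
    (f : C(X, A)) (hf : f ∈ closure (E : Set C(X, A))) (hfsa : IsSelfAdjoint f)
    (a b : ℝ)
    (U : Set X) (hU : U = {x : X | CstarLT (a • (1 : A)) (f x) ∧ CstarLT (f x) (b • (1 : A))}) :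
    Quotient.mk R ⁻¹' (Quotient.mk R '' U) = U ∧ IsOpen (Quotient.mk R '' U) := by
  rcases subsingleton_or_nontrivial A with hA | hA
  · have hUuniv : U = Set.univ := by
      rw [hU]
      ext x
      simp only [Set.mem_setOf_eq, Set.mem_univ, iff_true]
      exact ⟨⟨le_of_eq (Subsingleton.elim _ _), isUnit_of_subsingleton _⟩,
        ⟨le_of_eq (Subsingleton.elim _ _), isUnit_of_subsingleton _⟩⟩
    subst hUuniv
    rw [Set.image_univ, Set.range_eq_univ.mpr (fun q => Quotient.exists_rep q)]
    exact ⟨Set.preimage_univ, isOpen_univ⟩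
  · have hnegf : -f ∈ closure (E : Set C(X, A)) := by
      have h1 : -f ∈ Neg.neg '' closure (E : Set C(X, A)) := ⟨f, hf, rfl⟩
      have h2 : Neg.neg '' closure (E : Set C(X, A))
          ⊆ closure (Neg.neg '' (E : Set C(X, A))) :=
        image_closure_subset_closure_image continuous_neg
      have h3 : Neg.neg '' (E : Set C(X, A)) ⊆ (E : Set C(X, A)) := by
        rintro g ⟨g', hg', rfl⟩
        exact neg_mem hg'
      exact closure_mono h3 (h2 h1)
    have hU' : U = {x : X | Mspec ((-f) x) < -a ∧ Mspec (f x) < b} := by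
      rw [hU]
      ext x
      simp only [Set.mem_setOf_eq, ContinuousMap.neg_apply]
      rw [smul_one_cstarLT_iff (selfadjoint_apply hfsa x) a,
        cstarLT_smul_one_iff (selfadjoint_apply hfsa x) b]
    have hsat : Quotient.mk R ⁻¹' (Quotient.mk R '' U) = U := by
      refine Set.Subset.antisymm ?_ (Set.subset_preimage_image _ _)
      rintro x ⟨u, hu, huq⟩
      have hr : R.r u x := Quotient.exact huq
      rw [hU'] at hu ⊢
      have e1 : Mspec ((-f) u) = Mspec ((-f) x) :=
        mspec_eq_of_rel E R hM (-f) hnegf hfsa.neg u x hr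
      have e2 : Mspec (f u) = Mspec (f x) :=
        mspec_eq_of_rel E R hM f hf hfsa u x hr
      exact ⟨e1 ▸ hu.1, e2 ▸ hu.2⟩
    have hUopen : IsOpen U := by
      rw [hU']
      have c1 : Continuous fun x => Mspec ((-f) x) := mspec_comp_continuous (-f) hfsa.neg
      have c2 : Continuous fun x => Mspec (f x) := mspec_comp_continuous f hfsa
      exact (isOpen_lt c1 continuous_const).inter (isOpen_lt c2 continuous_const)
    refine ⟨hsat, ?_⟩
    rw [isOpen_coinduced (f := Quotient.mk R)]
    rwa [hsat]

end
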